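/- Let a be a weak composition of length n with at least one nonzero entry and let k be the largest index with a_k ≠ 0. Then the monomial slide polynomial 𝔐_a is quasisymmetric in the variables x_1,…,x_k if and only if a is quasi-flat. Moreover, when a is quasi-flat, 𝔐_a = M_{flat(a)}(x_1,…,x_k). -/

import Mathlib

open scoped Classical

namespace SlidePaper

/-- Sum of the first `i` entries of a weak composition of length `n`. -/
def psum {n : ℕ} (a : Fin n → ℕ) (i : ℕ) : ℕ :=
  ∑ j ∈ Finset.univ.filter (fun j : Fin n => (j : ℕ) < i), a j

/-- `b` dominates `a`: all partial sums of `b` are at least those of `a`. -/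
def Dominates {n : ℕ} (b a : Fin n → ℕ) : Prop :=
  ∀ i : Fin (n + 1), psum a i ≤ psum b i

/-- The flattening of a weak composition: the list of its nonzero entries in order. -/
def flat {n : ℕ} (a : Fin n → ℕ) : List ℕ :=
  (List.ofFn a).filter (fun x => x ≠ 0)

/-- `β` refines `α`: `β` splits into consecutive blocks with sums `α₁, α₂, …`. -/
def Refines (β α : List ℕ) : Prop :=
  ∃ L : List (List ℕ), L.flatten = β ∧ L.map List.sum = α

/-- All weak compositions of length `n` with entries at most `k`. -/
def wcFinset (n k : ℕ) : Finset (Fin n → ℕ) :=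
  Fintype.piFinset fun _ => Finset.range (k + 1)

/-- The monomial slide polynomial `𝔐_a`. -/
noncomputable def slideM {n : ℕ} (a : Fin n → ℕ) : MvPolynomial (Fin n) ℤ :=
  ∑ b ∈ (wcFinset n (∑ i, a i)).filter (fun b => Dominates b a ∧ flat b = flat a),
    MvPolynomial.monomial (Finsupp.equivFunOnFinite.symm b) 1

/-- The fundamental slide polynomial `𝔉_a`. -/
noncomputable def slideF {n : ℕ} (a : Fin n → ℕ) : MvPolynomial (Fin n) ℤ :=
  ∑ b ∈ (wcFinset n (∑ i, a i)).filter (fun b => Dominates b a ∧ Refines (flat b) (flat a)),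
    MvPolynomial.monomial (Finsupp.equivFunOnFinite.symm b) 1

/-- A weak composition is quasi-flat if its nonzero entries occupy consecutive positions. -/
def QuasiFlat {n : ℕ} (a : Fin n → ℕ) : Prop :=
  ∀ i j l : Fin n, i ≤ j → j ≤ l → a i ≠ 0 → a l ≠ 0 → a j ≠ 0

/-- `b` strongly dominates `a`. -/
def StronglyDominates {n : ℕ} (b a : Fin n → ℕ) : Prop :=
  Dominates b a ∧ ∀ c : Fin n → ℕ, Dominates c a → flat c = flat b → Dominates c b

/-- The exponent vector placing the parts of `α` at the positions `i`. -/
noncomputable def placeExp {n : ℕ} (α : List ℕ) (i : Fin α.length → Fin n) : Fin n →₀ ℕ :=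
  ∑ t : Fin α.length, Finsupp.single (i t) (α.get t)

/-- `f` is quasisymmetric in the variables `x_1, …, x_k` (0-indexed: `x_0, …, x_{k-1}`). -/
def IsQuasisymmetricIn {n : ℕ} (k : ℕ) (f : MvPolynomial (Fin n) ℤ) : Prop :=
  ∀ α : List ℕ, (∀ x ∈ α, 0 < x) →
    ∀ i j : Fin α.length → Fin n, StrictMono i → StrictMono j →
      (∀ t, (i t : ℕ) < k) → (∀ t, (j t : ℕ) < k) →
      MvPolynomial.coeff (placeExp α i) f = MvPolynomial.coeff (placeExp α j) f

/-- The monomial quasisymmetric polynomial `M_α(x_1, …, x_k)` inside `ℤ[x_1, …, x_n]`. -/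
noncomputable def Mqs (n k : ℕ) (α : List ℕ) : MvPolynomial (Fin n) ℤ :=
  ∑ i ∈ (Finset.univ : Finset (Fin α.length → Fin n)).filter
      (fun i : Fin α.length → Fin n => StrictMono i ∧ ∀ t, (i t : ℕ) < k),
    ∏ t : Fin α.length, (MvPolynomial.X (i t) : MvPolynomial (Fin n) ℤ) ^ α.get t

/-- The fundamental quasisymmetric polynomial `F_α(x_1, …, x_k)` inside `ℤ[x_1, …, x_n]`. -/
noncomputable def Fqs (n k : ℕ) (α : List ℕ) : MvPolynomial (Fin n) ℤ :=
  ∑ c ∈ (Finset.univ : Finset (Composition α.sum)).filter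
      (fun c => Refines c.blocks α ∧ c.blocks.length ≤ k),
    Mqs n k c.blocks

/-- Place the weak composition `a` (of length `N`) at offset `k` inside length `M`. -/
def shiftComp {N : ℕ} (k M : ℕ) (a : Fin N → ℕ) : Fin M → ℕ :=
  fun i => if h : k ≤ (i : ℕ) ∧ (i : ℕ) - k < N then a ⟨(i : ℕ) - k, h.2⟩ else 0

/-- Spread the values `g` to positions `ι` inside a weak composition of length `n`. -/
def spread {l n : ℕ} (ι : Fin l → Fin n) (g : Fin l → ℕ) : Fin n → ℕ :=
  fun i => ∑ k, if ι k = i then g k else 0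

/-- The monomial quasisymmetric function `M_α` in infinitely many variables. -/
noncomputable def MqsFun (α : List ℕ) : MvPowerSeries ℕ ℤ :=
  fun d => if ∃ i : Fin α.length → ℕ, StrictMono i ∧
      d = ∑ t : Fin α.length, Finsupp.single (i t) (α.get t) then 1 else 0

/-- The fundamental quasisymmetric function `F_α` in infinitely many variables. -/
noncomputable def FqsFun (α : List ℕ) : MvPowerSeries ℕ ℤ :=
  ∑ c ∈ (Finset.univ : Finset (Composition α.sum)).filter (fun c => Refines c.blocks α),
    MqsFun c.blocks

/-- The cells of the Young diagram of `lam` (French notation): row `r` (from the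
bottom, 0-indexed) has `lam.get r` cells. -/
abbrev Cells (lam : List ℕ) := Σ r : Fin lam.length, Fin (lam.get r)

/-- A filling of `lam` with entries in `{1, …, n}` (encoded as `Fin n`) is a semistandard
Young tableau: rows weakly increase left to right, columns strictly increase bottom to top. -/
def IsSSYT {n : ℕ} {lam : List ℕ} (T : Cells lam → Fin n) : Prop :=
  (∀ (r : Fin lam.length) (c c' : Fin (lam.get r)), c ≤ c' → T ⟨r, c⟩ ≤ T ⟨r, c'⟩) ∧
  (∀ (r r' : Fin lam.length) (c' : Fin (lam.get r')) (h : (c' : ℕ) < lam.get r),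
      (r : ℕ) < (r' : ℕ) → T ⟨r, ⟨c', h⟩⟩ < T ⟨r', c'⟩)

/-- The weight of a filling: the `v`-th entry counts the occurrences of the value `v`. -/
def wtT {n : ℕ} {lam : List ℕ} (T : Cells lam → Fin n) : Fin n → ℕ :=
  fun v => (Finset.univ.filter (fun x : Cells lam => T x = v)).card

/-- A filling is quasi-Yamanouchi if for every value `v > 1`, the leftmost occurrence of `v`
lies weakly left of some occurrence of `v - 1`. -/
def IsQY {n : ℕ} {lam : List ℕ} (T : Cells lam → Fin n) : Prop :=
  ∀ (v : Fin n) (x : Cells lam), T x = v → 0 < (v : ℕ) →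
    (∀ y : Cells lam, T y = v → (x.2 : ℕ) ≤ (y.2 : ℕ)) →
    ∃ z : Cells lam, (T z : ℕ) + 1 = (v : ℕ) ∧ (x.2 : ℕ) ≤ (z.2 : ℕ)

/-- The Schur polynomial `s_lam(x_1, …, x_n)` as the generating function of
semistandard Young tableaux. -/
noncomputable def schurPoly (n : ℕ) (lam : List ℕ) : MvPolynomial (Fin n) ℤ :=
  ∑ T ∈ (Finset.univ : Finset (Cells lam → Fin n)).filter (fun T => IsSSYT T),
    MvPolynomial.monomial (Finsupp.equivFunOnFinite.symm (wtT T)) 1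

/-- One destandardization step on fillings: for some value `v` occurring in `T` whose
leftmost occurrence is strictly right of every occurrence of `v - 1`, every `v` is
decremented to `v - 1`. -/
def TabStep {n : ℕ} {lam : List ℕ} (T T' : Cells lam → Fin n) : Prop :=
  ∃ v : Fin n, 0 < (v : ℕ) ∧ (∃ x, T x = v) ∧
    (∀ x y : Cells lam, T x = v → (T y : ℕ) + 1 = (v : ℕ) → (y.2 : ℕ) < (x.2 : ℕ)) ∧
    ∀ x : Cells lam, (T' x : ℕ) = if T x = v then (v : ℕ) - 1 else (T x : ℕ)

/-- The reading word of a set of crosses: rows are read from top to bottom, each row from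
left to right, the cross in (0-indexed) row `i` and column `j` recording the letter `i + j`
(representing the simple transposition swapping `i + j` and `i + j + 1` of `{0, 1, 2, …}`). -/
def readWord (P : Finset (ℕ × ℕ)) : List ℕ :=
  ((List.range (P.sup Prod.fst + 1)).reverse).flatMap
    (fun i => ((List.range (P.sup Prod.snd + 1)).filter (fun j => decide ((i, j) ∈ P))).map
      (fun j => i + j))

/-- The permutation `s_{i_ℓ} ⋯ s_{i_1}` associated to the word `(i_1, …, i_ℓ)`,
where `s_k` swaps `k` and `k + 1`. -/
def wordPerm (l : List ℕ) : Equiv.Perm ℕ :=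
  ((l.map (fun k => Equiv.swap k (k + 1))).reverse).prod

/-- A word is reduced if no shorter word has the same product. -/
def IsReducedWord (l : List ℕ) : Prop :=
  ∀ l' : List ℕ, wordPerm l' = wordPerm l → l.length ≤ l'.length

/-- `P` is a reduced pipe dream of shape `w`: the pipes trace out `w` and no two pipes
cross more than once, equivalently the reading word of `P` is a reduced word for `w`. -/
def IsPD (w : Equiv.Perm ℕ) (P : Finset (ℕ × ℕ)) : Prop :=
  wordPerm (readWord P) = w ∧ IsReducedWord (readWord P)

/-- `P` is a quasi-Yamanouchi pipe dream of shape `w`: for every row, the westernmost cross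
is in the first column or lies weakly west of some cross in the row above. -/
def IsQPD (w : Equiv.Perm ℕ) (P : Finset (ℕ × ℕ)) : Prop :=
  IsPD w P ∧ ∀ i j : ℕ, (i, j) ∈ P → (∀ j', (i, j') ∈ P → j ≤ j') →
    (j = 0 ∨ ∃ j', (i + 1, j') ∈ P ∧ j ≤ j')

/-- One destandardization step on pipe dreams: a row with no cross in the first column,
all of whose crosses lie strictly east of every cross in the row above, has all its
crosses moved one step northwest. -/
def PDStep (P P' : Finset (ℕ × ℕ)) : Prop :=
  ∃ r : ℕ, (∃ j, (r, j) ∈ P) ∧ (r, 0) ∉ P ∧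
    (∀ j j', (r, j) ∈ P → (r + 1, j') ∈ P → j' < j) ∧
    P' = P.filter (fun p => p.1 ≠ r) ∪
      (P.filter (fun p => p.1 = r)).image (fun p => (r + 1, p.2 - 1))

/-- The number of crosses of `P` in (0-indexed) row `i`. -/
def rowWt (P : Finset (ℕ × ℕ)) (i : ℕ) : ℕ := (P.filter (fun p => p.1 = i)).card

/-- The weight of a pipe dream, as a weak composition of length `n`. -/
def wtFin (n : ℕ) (P : Finset (ℕ × ℕ)) : Fin n → ℕ := fun i => rowWt P (i : ℕ)

/-- The flattened weight of a pipe dream: the list of nonzero row counts, bottom row first. -/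
def flatWt (P : Finset (ℕ × ℕ)) : List ℕ :=
  ((List.range (P.sup Prod.fst + 1)).map (rowWt P)).filter (fun x => x ≠ 0)

/-- The Schubert polynomial of `w` in the variables `x_1, …, x_n`, as the generating
function of reduced pipe dreams of shape `w`. -/
noncomputable def SchubertPoly (n : ℕ) (w : Equiv.Perm ℕ) : MvPolynomial (Fin n) ℤ :=
  ∑ᶠ P ∈ {P : Finset (ℕ × ℕ) | IsPD w P},
    MvPolynomial.monomial (Finsupp.equivFunOnFinite.symm (wtFin n P)) 1

/-- The Lehmer code of `w` (0-indexed): `lehmer w i` counts `j > i` with `w j < w i`. -/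
noncomputable def lehmer (w : Equiv.Perm ℕ) (i : ℕ) : ℕ :=
  Set.ncard {j : ℕ | i < j ∧ w j < w i}

/-- The Lehmer code of `w` as a weak composition of length `n`. -/
noncomputable def lehmerFin (n : ℕ) (w : Equiv.Perm ℕ) : Fin n → ℕ :=
  fun i => lehmer w (i : ℕ)

/-- The number of inversions of `w`. -/
noncomputable def invCount (w : Equiv.Perm ℕ) : ℕ :=
  Set.ncard {p : ℕ × ℕ | p.1 < p.2 ∧ w p.2 < w p.1}

/-- The largest entry of the Lehmer code of `w`. -/
noncomputable def maxLehmer (w : Equiv.Perm ℕ) : ℕ :=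
  sSup (Set.range (lehmer w))

/-- The (0-indexed) position of the first descent of `w`. -/
noncomputable def firstDescent (w : Equiv.Perm ℕ) : ℕ :=
  sInf {i : ℕ | w (i + 1) < w i}

/-- `δ(w) = 1` if every position attaining `max(L(w))` is at or before the first descent,
and `δ(w) = 0` otherwise. -/
noncomputable def delta (w : Equiv.Perm ℕ) : ℤ :=
  if ∀ i : ℕ, lehmer w i = maxLehmer w → i ≤ firstDescent w then 1 else 0

/-- `η(w) = inv(w) − max(L(w)) + δ(w) − min{i : w_i > w_{i+1}}`. -/
noncomputable def eta (w : Equiv.Perm ℕ) : ℤ :=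
  (invCount w : ℤ) - (maxLehmer w : ℤ) + delta w - ((firstDescent w : ℤ) + 1)

/-- The decomposition of a list into maximal strictly increasing runs. -/
def runsStrict : List ℕ → List (List ℕ)
  | [] => []
  | x :: rest =>
    match runsStrict rest, rest with
    | r :: rs, y :: _ => if x < y then (x :: r) :: rs else [x] :: r :: rs
    | _, _ => [[x]]

/-- The descent composition of a word: lengths of its maximal increasing runs, a new run
beginning whenever a letter is followed by a weakly smaller letter. -/
def desStrict (l : List ℕ) : List ℕ := (runsStrict l).map List.length

/-- The decomposition of a list into maximal weakly increasing runs. -/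
def runsWeak : List ℕ → List (List ℕ)
  | [] => []
  | x :: rest =>
    match runsWeak rest, rest with
    | r :: rs, y :: _ => if x ≤ y then (x :: r) :: rs else [x] :: r :: rs
    | _, _ => [[x]]

/-- The descent composition of a word: the lengths of its maximal weakly increasing runs. -/
def desComp (l : List ℕ) : List ℕ := (runsWeak l).map List.length

/-- The permutation `1^m × w`, fixing `0, …, m-1` and acting by `w` shifted by `m` above. -/
def shiftPerm (m : ℕ) (w : Equiv.Perm ℕ) : Equiv.Perm ℕ where
  toFun i := if i < m then i else w (i - m) + m
  invFun i := if i < m then i else w.symm (i - m) + m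
  left_inv i := by
    dsimp only
    by_cases h : i < m
    · simp [h]
    · have h2 : ¬ (w (i - m) + m < m) := by omega
      rw [if_neg h, if_neg h2, Nat.add_sub_cancel, Equiv.symm_apply_apply]
      omega
  right_inv i := by
    dsimp only
    by_cases h : i < m
    · simp [h]
    · have h2 : ¬ (w.symm (i - m) + m < m) := by omega
      rw [if_neg h, if_neg h2, Nat.add_sub_cancel, Equiv.apply_symm_apply]
      omega

/-- The quasi-shuffle product of two (strong) compositions, as a multiset of compositions. -/
def qShuffle : List ℕ → List ℕ → Multiset (List ℕ)
  | [], β => {β}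
  | α, [] => {α}
  | a :: α, b :: β =>
      ((qShuffle α (b :: β)).map (a :: ·)) + ((qShuffle (a :: α) β).map (b :: ·)) +
        ((qShuffle α β).map ((a + b) :: ·))
termination_by α β => α.length + β.length
decreasing_by all_goals (simp only [List.length_cons]; omega)

def shuffles : List ℕ → List ℕ → Multiset (List ℕ)
  | [], B => {B}
  | A, [] => {A}
  | x :: A, y :: B =>
      ((shuffles A (y :: B)).map (x :: ·)) + ((shuffles (x :: A) B).map (y :: ·))
termination_by A B => A.length + B.length
decreasing_by all_goals (simp only [List.length_cons]; omega)

/-- The word `(2n-1)^{a_1} (2n-3)^{a_2} ⋯ 1^{a_n}` associated to a weak composition `a`. -/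
def wordA {n : ℕ} (a : Fin n → ℕ) : List ℕ :=
  (List.ofFn (fun i : Fin n => List.replicate (a i) (2 * n - 2 * (i : ℕ) - 1))).flatten

/-- The word `(2n)^{b_1} (2n-2)^{b_2} ⋯ 2^{b_n}` associated to a weak composition `b`. -/
def wordB {n : ℕ} (b : Fin n → ℕ) : List ℕ :=
  (List.ofFn (fun i : Fin n => List.replicate (b i) (2 * n - 2 * (i : ℕ)))).flatten

/-- A list (padded with trailing zeros) dominates a weak composition of length `n`. -/
def DominatesList {n : ℕ} (l : List ℕ) (a : Fin n → ℕ) : Prop :=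
  ∀ i : Fin (n + 1), psum a (i : ℕ) ≤ ((l.take (i : ℕ)).sum)

/-- The number of letters of the `A`-word (the odd letters) in the `k`-th weakly
increasing run of `C`. -/
def runCountA (C : List ℕ) (k : Fin (runsWeak C).length) : ℕ :=
  (((runsWeak C).get k).filter (fun z => z % 2 = 1)).length

/-- The number of letters of the `B`-word (the even letters) in the `k`-th weakly
increasing run of `C`. -/
def runCountB (C : List ℕ) (k : Fin (runsWeak C).length) : ℕ :=
  (((runsWeak C).get k).filter (fun z => z % 2 = 0)).length

/-- The length of the `k`-th weakly increasing run of `C`. -/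
def runLen (C : List ℕ) (k : Fin (runsWeak C).length) : ℕ :=
  ((runsWeak C).get k).length

/-- `c = bump_{(a,b)}(C)`: the unique weak composition of length `n` obtained by inserting
zero parts into `Des(C)` so that the correspondingly placed `Des_A` and `Des_B` dominate
`a` and `b`, minimal in dominance order among all such insertions. -/
def IsBumpS {n : ℕ} (a b : Fin n → ℕ) (C : List ℕ) (c : Fin n → ℕ) : Prop :=
  ∃ ι : Fin (runsWeak C).length → Fin n, StrictMono ι ∧
    c = spread ι (runLen C) ∧
    Dominates (spread ι (runCountA C)) a ∧ Dominates (spread ι (runCountB C)) b ∧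
    ∀ ι' : Fin (runsWeak C).length → Fin n, StrictMono ι' →
      Dominates (spread ι' (runCountA C)) a → Dominates (spread ι' (runCountB C)) b →
      Dominates (spread ι' (runLen C)) c

/-- The multiplicity `[c ∣ a ⧢ b]` of `c` in the slide product of `a` and `b`: the number of
shuffles `C` of the words of `a` and `b` lying in the shuffle set `SS(a,b)` with
`bump_{(a,b)}(C) = c`. -/
noncomputable def slideMult {n : ℕ} (a b c : Fin n → ℕ) : ℕ :=
  Multiset.card ((shuffles (wordA a) (wordB b)).filter
    (fun C => DominatesList ((runsWeak C).map
        (fun r => (r.filter (fun z => z % 2 = 1)).length)) a ∧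
      DominatesList ((runsWeak C).map (fun r => (r.filter (fun z => z % 2 = 0)).length)) b ∧
      IsBumpS a b C c))

/-- Membership in the quasi-shuffle set `QSS(a,b)`: a pair `(γ_a, γ_b)` of weak compositions
of a common length at most `n` with `γ_a ≥ a`, `flat(γ_a) = flat(a)`, `γ_b ≥ b`,
`flat(γ_b) = flat(b)` (after padding with trailing zeros), and all entries of
`γ_a + γ_b` positive. -/
def InQSS {n : ℕ} (a b : Fin n → ℕ) (x : (l : ℕ) × (Fin l → ℕ) × (Fin l → ℕ)) : Prop :=
  x.1 ≤ n ∧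
  Dominates (shiftComp 0 n x.2.1) a ∧ flat x.2.1 = flat a ∧
  Dominates (shiftComp 0 n x.2.2) b ∧ flat x.2.2 = flat b ∧
  ∀ k : Fin x.1, 0 < x.2.1 k + x.2.2 k

/-- `c = bump_{(a,b)}(γ_a, γ_b)`: the unique weak composition `c` of length `n` with
`flat(c) = γ_a + γ_b` whose decomposition `c = c_a + c_b` satisfies `c_a ≥ a` and
`c_b ≥ b`, minimal in dominance order among all such compositions. -/
def IsBumpQ {n : ℕ} (a b : Fin n → ℕ) (x : (l : ℕ) × (Fin l → ℕ) × (Fin l → ℕ))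
    (c : Fin n → ℕ) : Prop :=
  ∃ ι : Fin x.1 → Fin n, StrictMono ι ∧
    c = spread ι (fun k => x.2.1 k + x.2.2 k) ∧
    Dominates (spread ι x.2.1) a ∧ Dominates (spread ι x.2.2) b ∧
    ∀ ι' : Fin x.1 → Fin n, StrictMono ι' →
      Dominates (spread ι' x.2.1) a → Dominates (spread ι' x.2.2) b →
      Dominates (spread ι' (fun k => x.2.1 k + x.2.2 k)) c

/-- The multiplicity `[c ∣ a ⧻ b]` of `c` in the quasi-slide product of `a` and `b`: the
number of pairs in the quasi-shuffle set `QSS(a,b)` whose bump is `c`. -/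
noncomputable def qsMult {n : ℕ} (a b c : Fin n → ℕ) : ℕ :=
  Nat.card {x : (l : ℕ) × (Fin l → ℕ) × (Fin l → ℕ) // InQSS a b x ∧ IsBumpQ a b x c}

/-- The Stanley symmetric function `S_w`. -/
noncomputable def StanleySym (w : Equiv.Perm ℕ) : MvPowerSeries ℕ ℤ :=
  ∑ᶠ l ∈ {l : List ℕ | wordPerm l = w ∧ IsReducedWord l}, FqsFun (desStrict l)

theorem spread_apply_self {l n : ℕ} {ι : Fin l → Fin n} (hι : Function.Injective ι)
    (g : Fin l → ℕ) (t : Fin l) : spread ι g (ι t) = g t := by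
  show (∑ k : Fin l, if ι k = ι t then g k else 0) = g t
  simp [hι.eq_iff]

theorem spread_apply_of_ne {l n : ℕ} {ι : Fin l → Fin n} (g : Fin l → ℕ) {i : Fin n}
    (h : ∀ t, ι t ≠ i) : spread ι g i = 0 := by
  rw [spread]
  exact Finset.sum_eq_zero fun t _ => if_neg (h t)

theorem psum_spread {l n : ℕ} (ι : Fin l → Fin n) (g : Fin l → ℕ) (m : ℕ) :
    psum (spread ι g) m = ∑ t ∈ Finset.univ.filter (fun t => (ι t : ℕ) < m), g t := by
  rw [psum]
  have h1 : ∀ j : Fin n, spread ι g j = ∑ t : Fin l, if ι t = j then g t else 0 := fun _ => rfl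
  simp_rw [h1]
  rw [Finset.sum_comm]
  rw [Finset.sum_filter]
  refine Finset.sum_congr rfl fun t _ => ?_
  rw [Finset.sum_ite_eq]
  simp

theorem filter_finRange {l n : ℕ} {ι : Fin l → Fin n} (hι : StrictMono ι)
    (p : Fin n → Bool) (hP : ∀ i, p i = true ↔ ∃ t, ι t = i) :
    (List.finRange n).filter p = (List.finRange l).map ι := by
  refine (fun h1 h2 h3 => List.Perm.eq_of_pairwise' (r := (· < ·)) h2 h3 h1) ?_ ?_ ?_
  · rw [List.perm_ext_iff_of_nodup]
    · intro i
      simp only [List.mem_filter, List.mem_finRange, true_and, List.mem_map, hP i]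
    · exact (List.nodup_finRange n).filter _
    · exact (List.nodup_finRange l).map (fun a b h => hι.injective h)
  · exact List.Pairwise.filter _ (List.pairwise_lt_finRange n)
  · exact (List.pairwise_lt_finRange l).map ι (fun a b h => hι h)

theorem flat_spread {l n : ℕ} {ι : Fin l → Fin n} (hι : StrictMono ι) {g : Fin l → ℕ}
    (hg : ∀ t, g t ≠ 0) : flat (spread ι g) = List.ofFn g := by
  rw [flat, List.ofFn_eq_map, List.filter_map,
    filter_finRange hι _ ?_]
  · rw [List.map_map, List.ofFn_eq_map]
    congr 1
    ext t
    exact spread_apply_self hι.injective g t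
  · intro i
    constructor
    · intro h
      simp only [Function.comp_apply, decide_eq_true_eq] at h
      by_contra hc
      push_neg at hc
      exact h (spread_apply_of_ne g hc)
    · rintro ⟨t, rfl⟩
      simp only [Function.comp_apply, decide_eq_true_eq]
      rw [spread_apply_self hι.injective]
      exact hg t

theorem exists_decomp {n : ℕ} (a : Fin n → ℕ) :
    ∃ (l : ℕ) (p : Fin l → Fin n), StrictMono p ∧ (∀ t, a (p t) ≠ 0) ∧
      (∀ i, a i ≠ 0 → ∃ t, p t = i) ∧ a = spread p (fun t => a (p t)) := by
  classical
  set S := Finset.univ.filter (fun i : Fin n => a i ≠ 0) with hS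
  refine ⟨S.card, S.orderEmbOfFin rfl, (S.orderEmbOfFin rfl).strictMono, ?_, ?_, ?_⟩
  · intro t
    have : S.orderEmbOfFin rfl t ∈ S := Finset.orderEmbOfFin_mem S rfl t
    exact of_decide_eq_true (by simpa [hS] using (Finset.mem_filter.mp this).2)
  · intro i hi
    have : i ∈ S := by simp [hS, hi]
    have h2 : i ∈ Set.range (S.orderEmbOfFin rfl) := by
      rw [Finset.range_orderEmbOfFin]; exact this
    exact h2
  · funext i
    by_cases h : ∃ t, S.orderEmbOfFin rfl t = i
    · obtain ⟨t, rfl⟩ := h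
      rw [spread_apply_self (S.orderEmbOfFin rfl).injective]
    · rw [spread_apply_of_ne _ (by push_neg at h; exact h)]
      by_contra hi
      have h3 : i ∈ S := by simp [hS, hi]
      have h2 : i ∈ Set.range (S.orderEmbOfFin rfl) := by
        rw [Finset.range_orderEmbOfFin]; exact h3
      obtain ⟨t, ht⟩ := h2
      exact h ⟨t, ht⟩

theorem flat_decomp {n l : ℕ} (a : Fin n → ℕ) (p : Fin l → Fin n) (hp : StrictMono p)
    (h0 : ∀ t, a (p t) ≠ 0) (ha : a = spread p (fun t => a (p t))) :
    flat a = List.ofFn (fun t => a (p t)) := by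
  conv_lhs => rw [ha]
  exact flat_spread hp h0

theorem strictMono_nat_le {l n : ℕ} {q : Fin l → Fin n} (hq : StrictMono q)
    {t s : Fin l} (h : t ≤ s) : (q t : ℕ) + ((s : ℕ) - (t : ℕ)) ≤ q s := by
  have key : ∀ d : ℕ, ∀ t s : Fin l, (t : ℕ) + d = (s : ℕ) → (q t : ℕ) + d ≤ q s := by
    intro d
    induction d with
    | zero =>
      intro t s h
      have hts : t = s := Fin.ext (by omega)
      subst hts
      omega
    | succ d ih =>
      intro t s h
      have hs : (t : ℕ) + d < l := by omega
      have h1 := ih t ⟨(t : ℕ) + d, hs⟩ rfl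
      have h2 : (⟨(t : ℕ) + d, hs⟩ : Fin l) < s := by
        rw [Fin.lt_def]; simp; omega
      have := hq h2
      rw [Fin.lt_def] at this
      omega
  have := key ((s : ℕ) - (t : ℕ)) t s (by have := Fin.le_def.mp h; omega)
  omega

theorem dominates_spread_iff {l n : ℕ} {p q : Fin l → Fin n} (hp : StrictMono p)
    (hq : StrictMono q) {g : Fin l → ℕ} (hg : ∀ t, g t ≠ 0) :
    Dominates (spread q g) (spread p g) ↔ ∀ t, q t ≤ p t := by
  constructor
  · intro h t
    by_contra hc
    push_neg at hc
    have hm : (p t : ℕ) + 1 ≤ n := (p t).isLt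
    have hd := h ⟨(p t : ℕ) + 1, by omega⟩
    rw [psum_spread, psum_spread] at hd
    simp only [] at hd
    have hA : Finset.univ.filter (fun s => ((p s : ℕ) < (p t : ℕ) + 1))
        = insert t (Finset.univ.filter (fun s => s < t)) := by
      ext s
      simp only [Finset.mem_filter, Finset.mem_univ, true_and, Finset.mem_insert]
      constructor
      · intro hs
        rcases lt_trichotomy s t with h1 | h1 | h1
        · exact Or.inr h1
        · exact Or.inl h1
        · exfalso
          have := hp h1
          rw [Fin.lt_def] at this
          omega
      · rintro (rfl | hs)
        · omega
        · have := hp hs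
          rw [Fin.lt_def] at this
          omega
    have hB : Finset.univ.filter (fun s => ((q s : ℕ) < (p t : ℕ) + 1))
        ⊆ Finset.univ.filter (fun s => s < t) := by
      intro s hs
      simp only [Finset.mem_filter, Finset.mem_univ, true_and] at hs ⊢
      by_contra h2
      push_neg at h2
      have := hq.monotone h2
      rw [Fin.le_def] at this
      rw [Fin.lt_def] at hc
      omega
    rw [hA, Finset.sum_insert (by simp)] at hd
    have hsub := Finset.sum_le_sum_of_subset (f := g) hB
    have hgt := Nat.pos_of_ne_zero (hg t)
    omega
  · intro h i
    rw [psum_spread, psum_spread]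
    apply Finset.sum_le_sum_of_subset
    intro s hs
    simp only [Finset.mem_filter, Finset.mem_univ, true_and] at hs ⊢
    have := h s
    rw [Fin.le_def] at this
    omega

theorem spread_inj {l l' n : ℕ} {ι : Fin l → Fin n} {κ : Fin l' → Fin n}
    (hι : StrictMono ι) (hκ : StrictMono κ) {g : Fin l → ℕ} {g' : Fin l' → ℕ}
    (hg : ∀ t, g t ≠ 0) (hg' : ∀ t, g' t ≠ 0) (h : spread ι g = spread κ g') :
    ∃ e : l = l', (∀ t : Fin l, κ (Fin.cast e t) = ι t) ∧ ∀ t : Fin l, g' (Fin.cast e t) = g t := by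
  have hmem : ∀ i : Fin n, spread ι g i ≠ 0 ↔ ∃ t, ι t = i := by
    intro i
    constructor
    · intro hi
      by_contra hc
      push_neg at hc
      exact hi (spread_apply_of_ne g hc)
    · rintro ⟨t, rfl⟩
      rw [spread_apply_self hι.injective]
      exact hg t
  have hmem' : ∀ i : Fin n, spread κ g' i ≠ 0 ↔ ∃ t, κ t = i := by
    intro i
    constructor
    · intro hi
      by_contra hc
      push_neg at hc
      exact hi (spread_apply_of_ne g' hc)
    · rintro ⟨t, rfl⟩
      rw [spread_apply_self hκ.injective]
      exact hg' t
  have h1 : (List.finRange n).filter (fun i => decide (spread ι g i ≠ 0))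
      = (List.finRange l).map ι :=
    filter_finRange hι _ (by intro i; rw [decide_eq_true_eq]; exact hmem i)
  have h2 : (List.finRange n).filter (fun i => decide (spread ι g i ≠ 0))
      = (List.finRange l').map κ := by
    rw [h]
    exact filter_finRange hκ _ (by intro i; rw [decide_eq_true_eq]; exact hmem' i)
  have h3 : (List.finRange l).map ι = (List.finRange l').map κ := h1.symm.trans h2
  have he : l = l' := by
    have := congrArg List.length h3
    simpa using this
  refine ⟨he, ?_, ?_⟩
  · intro t
    have h4 : ((List.finRange l).map ι)[(t : ℕ)]'(by simpa using t.isLt)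
        = ((List.finRange l').map κ)[(t : ℕ)]'(by simp; omega) := by
      congr 1
    have h6 := h4.symm
    simp at h6
    exact h6
  · intro t
    have h5 : κ (Fin.cast he t) = ι t := by
      have h4 : ((List.finRange l).map ι)[(t : ℕ)]'(by simpa using t.isLt)
          = ((List.finRange l').map κ)[(t : ℕ)]'(by simp; omega) := by
        congr 1
      have h6 := h4.symm
      simp at h6
      exact h6
    have := congrFun h (ι t)
    rw [spread_apply_self hι.injective] at this
    rw [this, ← h5, spread_apply_self hκ.injective]

theorem mem_flat_iff {n : ℕ} (a : Fin n → ℕ) (x : ℕ) :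
    x ∈ flat a ↔ x ≠ 0 ∧ ∃ j, a j = x := by
  rw [flat]
  simp only [List.mem_filter, List.mem_ofFn, decide_eq_true_eq, Set.mem_range]
  tauto

theorem mem_wcFinset {n : ℕ} (a b : Fin n → ℕ) (h : flat b = flat a) :
    b ∈ wcFinset n (∑ i, a i) := by
  rw [wcFinset, Fintype.mem_piFinset]
  intro i
  rw [Finset.mem_range]
  rcases Nat.eq_zero_or_pos (b i) with h0 | h0
  · omega
  · have : b i ∈ flat b := by
      rw [mem_flat_iff]
      exact ⟨by omega, i, rfl⟩
    rw [h, mem_flat_iff] at this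
    obtain ⟨-, j, hj⟩ := this
    have : b i ≤ ∑ i, a i := hj ▸ Finset.single_le_sum (fun _ _ => Nat.zero_le _) (Finset.mem_univ j)
    omega

theorem placeExp_eq {n : ℕ} (α : List ℕ) (i : Fin α.length → Fin n) :
    placeExp α i = Finsupp.equivFunOnFinite.symm (spread i α.get) := by
  ext x
  rw [placeExp, Finsupp.finset_sum_apply]
  simp only [Finsupp.coe_equivFunOnFinite_symm, spread]
  exact Finset.sum_congr rfl fun t _ => Finsupp.single_apply

theorem coeff_slideM {n : ℕ} (a : Fin n → ℕ) (d : Fin n →₀ ℕ) :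
    MvPolynomial.coeff d (slideM a) =
      if Dominates (⇑d) a ∧ flat (⇑d) = flat a then 1 else 0 := by
  rw [slideM, MvPolynomial.coeff_sum]
  simp only [MvPolynomial.coeff_monomial]
  simp_rw [Equiv.symm_apply_eq]
  rw [Finset.sum_ite_eq' (Finset.filter _ (wcFinset n (∑ i : Fin n, a i)))
    (Finsupp.equivFunOnFinite d) (fun _ => (1 : ℤ))]
  have hde : (Finsupp.equivFunOnFinite d : Fin n → ℕ) = ⇑d := rfl
  by_cases h : Dominates (⇑d) a ∧ flat (⇑d) = flat a
  · rw [if_pos h, if_pos]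
    rw [Finset.mem_filter, hde]
    exact ⟨mem_wcFinset a (⇑d) h.2, h⟩
  · rw [if_neg h, if_neg]
    rw [Finset.mem_filter, hde]
    tauto

theorem prod_monomial {n : ℕ} {T : Type*} (s : Finset T) (d : T → (Fin n →₀ ℕ)) :
    ∏ t ∈ s, (MvPolynomial.monomial (d t) (1 : ℤ)) = MvPolynomial.monomial (∑ t ∈ s, d t) 1 := by
  induction s using Finset.cons_induction with
  | empty => simp [MvPolynomial.monomial_zero']
  | cons x s hx ih =>
    rw [Finset.prod_cons, Finset.sum_cons, ih, MvPolynomial.monomial_mul, one_mul]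

theorem coeff_Mqs {n : ℕ} (k : ℕ) (α : List ℕ) (d : Fin n →₀ ℕ) :
    MvPolynomial.coeff d (Mqs n k α) =
      ((Finset.univ.filter (fun i : Fin α.length → Fin n =>
        (StrictMono i ∧ ∀ t, (i t : ℕ) < k) ∧ placeExp α i = d)).card : ℤ) := by
  rw [Mqs]
  have h1 : ∀ i : Fin α.length → Fin n,
      (∏ t : Fin α.length, (MvPolynomial.X (i t) : MvPolynomial (Fin n) ℤ) ^ α.get t)
        = MvPolynomial.monomial (placeExp α i) 1 := by
    intro i
    simp_rw [MvPolynomial.X_pow_eq_monomial]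
    rw [prod_monomial]
    rfl
  simp_rw [h1]
  rw [MvPolynomial.coeff_sum]
  simp only [MvPolynomial.coeff_monomial]
  rw [Finset.sum_ite, Finset.sum_const_zero, add_zero, Finset.sum_const, nsmul_eq_mul, mul_one]
  congr 1
  rw [Finset.filter_filter]

theorem spread_comp_cast {l l' n : ℕ} (e : l' = l) (q : Fin l → Fin n) (g : Fin l' → ℕ) :
    spread (fun t => q (Fin.cast e t)) g = spread q (fun t => g (Fin.cast e.symm t)) := by
  funext i
  show (∑ t : Fin l', if q (Fin.cast e t) = i then g t else 0)
    = ∑ t : Fin l, if q t = i then g (Fin.cast e.symm t) else 0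
  apply Fintype.sum_bijective (Fin.cast e) ⟨fun x y h => by simpa [Fin.ext_iff] using h, fun y => ⟨Fin.cast e.symm y, rfl⟩⟩
  intro t
  rfl

theorem flat_get_ne_zero {n : ℕ} {a : Fin n → ℕ} {α : List ℕ} (hα : flat a = α)
    (t : Fin α.length) : α.get t ≠ 0 := by
  have h1 : α.get t ∈ α := α.get_mem t
  have h2 : α.get t ∈ flat a := by rw [hα]; exact h1
  rw [mem_flat_iff] at h2
  exact h2.1

theorem decomp2 {n : ℕ} (a : Fin n → ℕ) (α : List ℕ) (hα : flat a = α) :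
    ∃ p : Fin α.length → Fin n, StrictMono p ∧ a = spread p α.get ∧
      ∀ i, a i ≠ 0 → ∃ t, p t = i := by
  obtain ⟨l, p, hp, h0, hcov, ha⟩ := exists_decomp a
  have hflat : α = List.ofFn (fun t => a (p t)) := hα ▸ flat_decomp a p hp h0 ha
  have e : α.length = l := by rw [hflat, List.length_ofFn]
  refine ⟨fun t => p (Fin.cast e t), hp.comp (fun x y h => h), ?_, ?_⟩
  · rw [spread_comp_cast e p α.get]
    have hg : (fun t => α.get (Fin.cast e.symm t)) = fun t => a (p t) := by
      funext t
      rw [show α.get (Fin.cast e.symm t) = α[(t : ℕ)]'(by rw [e]; exact t.isLt) from rfl]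
      simp [hflat]
    rw [hg]
    exact ha
  · intro i hi
    obtain ⟨t, ht⟩ := hcov i hi
    exact ⟨Fin.cast e.symm t, by simpa using ht⟩

theorem coe_placeExp {n : ℕ} (α : List ℕ) (i : Fin α.length → Fin n) :
    ⇑(placeExp α i) = spread i α.get := by
  rw [placeExp_eq]
  rfl

theorem char1 {n m : ℕ} {a : Fin n → ℕ} {p : Fin m → Fin n} {i₀ : Fin n}
    (hp : StrictMono p) (h0 : ∀ t, a (p t) ≠ 0) (hcov : ∀ i, a i ≠ 0 → ∃ t, p t = i)
    (hlast : ∀ hm : 0 < m, p ⟨m - 1, by omega⟩ = i₀)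
    (hq : QuasiFlat a) : ∀ t : Fin m, (p t : ℕ) + (m - 1 - (t : ℕ)) = (i₀ : ℕ) := by
  have hadj : ∀ t : ℕ, (ht : t + 1 < m) →
      (p ⟨t + 1, ht⟩ : ℕ) = (p ⟨t, by omega⟩ : ℕ) + 1 := by
    intro t ht
    have hlt : (⟨t, by omega⟩ : Fin m) < ⟨t + 1, ht⟩ := by
      rw [Fin.lt_def]; simp
    have h1 := hp hlt
    rw [Fin.lt_def] at h1
    by_contra hc
    have h2 : (p ⟨t, by omega⟩ : ℕ) + 1 < (p ⟨t + 1, ht⟩ : ℕ) := by omega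
    have hjn : (p ⟨t, by omega⟩ : ℕ) + 1 < n := by
      have := (p ⟨t + 1, ht⟩).isLt
      omega
    have haj : a ⟨(p ⟨t, by omega⟩ : ℕ) + 1, hjn⟩ ≠ 0 := by
      apply hq (p ⟨t, by omega⟩) _ (p ⟨t + 1, ht⟩) _ _ (h0 _) (h0 _)
      · rw [Fin.le_def]; simp
      · rw [Fin.le_def]; simp; omega
    obtain ⟨s, hs⟩ := hcov _ haj
    have hs1 : (⟨t, by omega⟩ : Fin m) < s := by
      rw [← hp.lt_iff_lt, hs, Fin.lt_def]
      simp
    have hs2 : s < (⟨t + 1, ht⟩ : Fin m) := by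
      rw [← hp.lt_iff_lt, hs, Fin.lt_def]
      simp
      omega
    rw [Fin.lt_def] at hs1 hs2
    simp at hs1 hs2
    omega
  intro t
  have hm : 0 < m := t.pos
  have key : ∀ d : ℕ, ∀ s : ℕ, (hs : s < m) →
      s + d = m - 1 → (p ⟨s, hs⟩ : ℕ) + d = (i₀ : ℕ) := by
    intro d
    induction d with
    | zero =>
      intro s hs h
      have he : (⟨s, hs⟩ : Fin m) = ⟨m - 1, by omega⟩ := by
        rw [Fin.ext_iff]; simp; omega
      rw [he, hlast hm]
      omega
    | succ d ih =>
      intro s hs h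
      have hs1 : s + 1 < m := by omega
      have hih := ih (s + 1) hs1 (by omega)
      have h2 := hadj s hs1
      omega
  have hkey := key (m - 1 - (t : ℕ)) (t : ℕ) t.isLt (by have := t.isLt; omega)
  have h3 : (⟨(t : ℕ), t.isLt⟩ : Fin m) = t := by rw [Fin.ext_iff]
  rw [h3] at hkey
  exact hkey

theorem char2 {n m k : ℕ} {a : Fin n → ℕ} {p : Fin m → Fin n}
    (h0 : ∀ t, a (p t) ≠ 0) (hcov : ∀ i, a i ≠ 0 → ∃ t, p t = i)
    (hc : ∀ t : Fin m, (p t : ℕ) = k - m + (t : ℕ)) : QuasiFlat a := by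
  intro i j l hij hjl hi hl
  obtain ⟨s, hs⟩ := hcov i hi
  obtain ⟨u, hu⟩ := hcov l hl
  rw [Fin.le_def] at hij hjl
  have h1 : (i : ℕ) = k - m + (s : ℕ) := by rw [← hs]; exact hc s
  have h2 : (l : ℕ) = k - m + (u : ℕ) := by rw [← hu]; exact hc u
  have hu2 := u.isLt
  have ht : (j : ℕ) - (k - m) < m := by omega
  have h4 := hc ⟨(j : ℕ) - (k - m), ht⟩
  rw [show ((⟨(j : ℕ) - (k - m), ht⟩ : Fin m) : ℕ) = (j : ℕ) - (k - m) from rfl] at h4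
  have hpj : p ⟨(j : ℕ) - (k - m), ht⟩ = j := by rw [Fin.ext_iff]; omega
  rw [← hpj]
  exact h0 _

theorem main_aux {n : ℕ} (a : Fin n → ℕ) (k : ℕ) (α : List ℕ) (hα : flat a = α)
    (i₀ : Fin n) (hik : (i₀ : ℕ) + 1 = k) (hi₀ : a i₀ ≠ 0)
    (hmax : ∀ j : Fin n, a j ≠ 0 → j ≤ i₀) :
    (IsQuasisymmetricIn k (slideM a) ↔ QuasiFlat a) ∧
    (QuasiFlat a → slideM a = Mqs n k α) := by
  classical
  obtain ⟨p, hp, ha, hcov⟩ := decomp2 a α hα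
  have hpos : ∀ t : Fin α.length, α.get t ≠ 0 := fun t => flat_get_ne_zero hα t
  have hapt : ∀ t, a (p t) = α.get t := by
    intro t
    conv_lhs => rw [ha]
    exact spread_apply_self hp.injective _ t
  have h0 : ∀ t, a (p t) ≠ 0 := fun t => (hapt t) ▸ hpos t
  obtain ⟨t₀, ht₀⟩ := hcov i₀ hi₀
  have hmpos : 0 < α.length := t₀.pos
  have hlast : ∀ hm : 0 < α.length, p ⟨α.length - 1, by omega⟩ = i₀ := by
    intro hm
    apply le_antisymm
    · exact hmax _ (h0 _)
    · rw [← ht₀]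
      apply hp.monotone
      rw [Fin.le_def]
      have := t₀.isLt
      simp
      omega
  have hub : ∀ t : Fin α.length,
      (p t : ℕ) + (α.length - 1 - (t : ℕ)) ≤ (i₀ : ℕ) := by
    intro t
    have h1 : t ≤ (⟨α.length - 1, by omega⟩ : Fin α.length) := by
      rw [Fin.le_def]
      have := t.isLt
      simp
      omega
    have h2 := strictMono_nat_le hp h1
    rw [hlast hmpos] at h2
    simpa using h2
  have hkn : k ≤ n := by have := i₀.isLt; omega
  have hmk : α.length ≤ k := by
    have := hub ⟨0, hmpos⟩
    simp at this
    omega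
  have hchar1 : QuasiFlat a → ∀ t : Fin α.length,
      (p t : ℕ) = k - α.length + (t : ℕ) := by
    intro hq t
    have := char1 hp h0 hcov hlast hq t
    have := t.isLt
    omega
  have hpk : ∀ t, (p t : ℕ) < k := by
    intro t
    have := hub t
    omega
  have hMqs : QuasiFlat a → slideM a = Mqs n k α := by
    intro hq
    have hcons := hchar1 hq
    apply MvPolynomial.ext
    intro d
    rw [coeff_slideM, hα, coeff_Mqs]
    by_cases hcase : Dominates (⇑d) a ∧ flat (⇑d) = α
    · rw [if_pos hcase]
      obtain ⟨q, hqSM, hd, -⟩ := decomp2 (⇑d) α hcase.2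
      have hdq : ∀ t, q t ≤ p t := by
        apply (dominates_spread_iff hp hqSM hpos).mp
        rw [← hd, ← ha]
        exact hcase.1
      have hqk : ∀ t, (q t : ℕ) < k := by
        intro t
        have h1 := hdq t
        rw [Fin.le_def] at h1
        have h2 := hcons t
        have := t.isLt
        omega
      have hqmem : placeExp α q = d := by
        have hcc : ⇑(placeExp α q) = ⇑d := by rw [coe_placeExp, ← hd]
        exact DFunLike.coe_injective hcc
      have hset : Finset.univ.filter (fun i : Fin α.length → Fin n =>
          (StrictMono i ∧ ∀ t, (i t : ℕ) < k) ∧ placeExp α i = d) = {q} := by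
        apply Finset.ext
        intro ι
        simp only [Finset.mem_filter, Finset.mem_univ, true_and, Finset.mem_singleton]
        constructor
        · rintro ⟨⟨hιSM, hιk⟩, hιd⟩
          have hsp : spread ι α.get = spread q α.get := by
            rw [← coe_placeExp _ ι, hιd, hd]
          obtain ⟨e, hι1, -⟩ := spread_inj hιSM hqSM hpos hpos hsp
          funext t
          exact (hι1 t).symm.trans (congrArg q (Fin.ext rfl))
        · rintro rfl
          exact ⟨⟨hqSM, hqk⟩, hqmem⟩
      rw [hset, Finset.card_singleton, Nat.cast_one]
    · rw [if_neg hcase]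
      have hset : Finset.univ.filter (fun i : Fin α.length → Fin n =>
          (StrictMono i ∧ ∀ t, (i t : ℕ) < k) ∧ placeExp α i = d) = ∅ := by
        rw [Finset.filter_eq_empty_iff]
        rintro ι - ⟨⟨hιSM, hιk⟩, hιd⟩
        have hdι : ⇑d = spread ι α.get := by rw [← hιd, coe_placeExp]
        apply hcase
        constructor
        · rw [hdι, ha]
          apply (dominates_spread_iff hp hιSM hpos).mpr
          intro t
          rw [Fin.le_def]
          have h1 : (ι t : ℕ) + (α.length - 1 - (t : ℕ)) ≤
              (ι ⟨α.length - 1, by omega⟩ : ℕ) := by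
            have h2 : t ≤ (⟨α.length - 1, by omega⟩ : Fin α.length) := by
              rw [Fin.le_def]
              have := t.isLt
              simp
              omega
            have := strictMono_nat_le hιSM h2
            simpa using this
          have h3 := hιk ⟨α.length - 1, by omega⟩
          have h4 := hcons t
          have := t.isLt
          omega
        · rw [hdι, flat_spread hιSM hpos, List.ofFn_get]
      rw [hset, Finset.card_empty, Nat.cast_zero]
  have hQSym : QuasiFlat a → IsQuasisymmetricIn k (slideM a) := by
    intro hq
    rw [hMqs hq]
    intro β hβ i j hi hj hik2 hjk2
    have hβpos : ∀ t : Fin β.length, β.get t ≠ 0 := by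
      intro t
      exact (hβ _ (β.get_mem t)).ne'
    have key : ∀ (ι : Fin β.length → Fin n), StrictMono ι → (∀ t, (ι t : ℕ) < k) →
        MvPolynomial.coeff (placeExp β ι) (Mqs n k α) =
          if β = α then 1 else 0 := by
      intro ι hι hιk
      rw [coeff_Mqs]
      by_cases hβα : β = α
      · rw [if_pos hβα]
        subst hβα
        have hset : Finset.univ.filter (fun κ : Fin β.length → Fin n =>
            (StrictMono κ ∧ ∀ t, (κ t : ℕ) < k) ∧ placeExp β κ = placeExp β ι) = {ι} := by
          apply Finset.ext
          intro κ
          simp only [Finset.mem_filter, Finset.mem_univ, true_and, Finset.mem_singleton]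
          constructor
          · rintro ⟨⟨hκSM, hκk⟩, hκd⟩
            have hsp : spread κ β.get = spread ι β.get := by
              rw [← coe_placeExp _ κ, ← coe_placeExp _ ι, hκd]
            obtain ⟨e, h1, -⟩ := spread_inj hκSM hι hβpos hβpos hsp
            funext t
            exact (h1 t).symm.trans (congrArg ι (Fin.ext rfl))
          · rintro rfl
            exact ⟨⟨hι, hιk⟩, rfl⟩
        rw [hset, Finset.card_singleton, Nat.cast_one]
      · rw [if_neg hβα]
        have hset : Finset.univ.filter (fun κ : Fin α.length → Fin n =>
            (StrictMono κ ∧ ∀ t, (κ t : ℕ) < k) ∧ placeExp α κ = placeExp β ι) = ∅ := by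
          rw [Finset.filter_eq_empty_iff]
          rintro κ - ⟨⟨hκSM, hκk⟩, hκd⟩
          have hsp : spread κ α.get = spread ι β.get := by
            rw [← coe_placeExp _ κ, ← coe_placeExp _ ι, hκd]
          obtain ⟨e, -, h2⟩ := spread_inj hκSM hι hpos hβpos hsp
          apply hβα
          apply List.ext_get e.symm
          intro s h1 h2'
          have h3 := h2 ⟨s, by omega⟩
          simpa using h3
        rw [hset, Finset.card_empty, Nat.cast_zero]
    rw [key i hi hik2, key j hj hjk2]
  have hrev : IsQuasisymmetricIn k (slideM a) → QuasiFlat a := by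
    intro hQ
    apply char2 h0 hcov (k := k)
    by_contra hcne
    push_neg at hcne
    obtain ⟨t₁, ht₁⟩ := hcne
    have hlt : (p t₁ : ℕ) < k - α.length + (t₁ : ℕ) := by
      have := hub t₁
      have := t₁.isLt
      omega
    have hjn : ∀ t : Fin α.length, k - α.length + (t : ℕ) < n := by
      intro t
      have := t.isLt
      omega
    have hjSM : StrictMono (fun t : Fin α.length =>
        (⟨k - α.length + (t : ℕ), hjn t⟩ : Fin n)) := by
      intro x y hxy
      rw [Fin.lt_def] at hxy ⊢
      simp
      omega
    have hjk : ∀ t : Fin α.length,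
        ((⟨k - α.length + (t : ℕ), hjn t⟩ : Fin n) : ℕ) < k := by
      intro t
      have := t.isLt
      simp
      omega
    have hβ : ∀ x ∈ α, 0 < x := by
      intro x hx
      rw [← hα, mem_flat_iff] at hx
      omega
    have hQ2 := hQ α hβ p _ hp hjSM hpk hjk
    have hcoe1 : ⇑(placeExp α p) = a := by rw [coe_placeExp, ← ha]
    have h1 : MvPolynomial.coeff (placeExp α p) (slideM a) = 1 := by
      rw [coeff_slideM, if_pos]
      rw [hcoe1]
      exact ⟨fun i => le_refl _, rfl⟩
    have h2 : MvPolynomial.coeff (placeExp α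
        (fun t => (⟨k - α.length + (t : ℕ), hjn t⟩ : Fin n))) (slideM a) = 0 := by
      rw [coeff_slideM, if_neg]
      rintro ⟨hdom, -⟩
      rw [coe_placeExp, ha] at hdom
      have h3 := (dominates_spread_iff hp hjSM hpos).mp hdom t₁
      rw [Fin.le_def] at h3
      simp at h3
      omega
    rw [h1, h2] at hQ2
    exact absurd hQ2 one_ne_zero
  exact ⟨⟨hrev, hQSym⟩, hMqs⟩

/-- `𝔐_a` is quasisymmetric in `x_1, …, x_k` iff `a` is quasi-flat, where `k`
is the largest index with `a_k ≠ 0`; in that case `𝔐_a = M_{flat(a)}(x_1, …, x_k)`. -/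
theorem monomialSlide_quasisymmetric_iff_quasiFlat {n : ℕ} (a : Fin n → ℕ) (k : ℕ)
    (hk : ∃ i : Fin n, (i : ℕ) + 1 = k ∧ a i ≠ 0 ∧ ∀ j : Fin n, a j ≠ 0 → j ≤ i) :
    (IsQuasisymmetricIn k (slideM a) ↔ QuasiFlat a) ∧
    (QuasiFlat a → slideM a = Mqs n k (flat a)) := by

  obtain ⟨i₀, hik, hi₀, hmax⟩ := hk
  exact main_aux a k (flat a) rfl i₀ hik hi₀ hmax


end SlidePaper
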